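/- Let n ≥ 3 and Λ ≥ 1 be integers, and let (ℓ_j)_{j≥1} be a sequence of positive integers which is eventually constant, i.e. there exist J ≥ 1 and an integer c ≥ 1 with ℓ_j = c for all j ≥ J. Then it is NOT the case that for every j ≥ 1 the real number a_j := (ℓ_{j+1}+1)^{n−2}·Λ·( ℓ_{j+1}²/(n−1)^{j} + (n·ℓ_{j+1}+1)·∑_{i=1}^{j} ℓ_i/(n−1)^{i} ) is an integer. -/

import Mathlib

/-- **Arithmetic core of Lemma 5.1 of the paper.**
Let `n ≥ 3` and `Λ ≥ 1` be integers, and let `(ℓ_j)_{j≥1}` be a sequence of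
positive integers which is eventually constant (equal to some `c ≥ 1` from
index `J` on). Then it is NOT the case that for every `j ≥ 1` the real number
`a_j = (ℓ_{j+1}+1)^(n-2) · Λ · ( ℓ_{j+1}²/(n-1)^j + (n·ℓ_{j+1}+1)·∑_{i=1}^{j} ℓ_i/(n-1)^i )`
is an integer. -/
theorem not_forall_integrality_of_eventually_constant
    (n : ℕ) (hn : 3 ≤ n) (Λ : ℤ) (hΛ : 1 ≤ Λ)
    (ℓ : ℕ → ℕ) (hpos : ∀ j : ℕ, 1 ≤ j → 1 ≤ ℓ j)
    (J : ℕ) (hJ : 1 ≤ J) (c : ℕ) (hc : 1 ≤ c) (hconst : ∀ j : ℕ, J ≤ j → ℓ j = c) :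
    ¬ (∀ j : ℕ, 1 ≤ j → ∃ z : ℤ,
        ((ℓ (j + 1) : ℝ) + 1) ^ (n - 2) * (Λ : ℝ) *
          ((ℓ (j + 1) : ℝ) ^ 2 / ((n : ℝ) - 1) ^ j
            + ((n : ℝ) * (ℓ (j + 1) : ℝ) + 1) *
                ∑ i ∈ Finset.Icc 1 j, (ℓ i : ℝ) / ((n : ℝ) - 1) ^ i)
        = (z : ℝ)) := by
  intro h
  set Knat : ℕ := (c + 1) ^ (n - 2) * Λ.toNat * c * (2 * c + 1) with hKnat
  set j : ℕ := max J (max 1 Knat) with hj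
  have hjJ : J ≤ j := le_max_left _ _
  have hj1 : 1 ≤ j := le_trans (le_max_left 1 Knat) (le_max_right _ _)
  have hjK : Knat ≤ j := le_trans (le_max_right 1 Knat) (le_max_right _ _)
  obtain ⟨z, hz⟩ := h j hj1
  obtain ⟨z', hz'⟩ := h (j + 1) (by omega)
  have hc1 : ℓ (j + 1) = c := hconst _ (by omega)
  have hc2 : ℓ (j + 1 + 1) = c := hconst _ (by omega)
  have hn3 : (3 : ℝ) ≤ (n : ℝ) := by exact_mod_cast hn
  have hp2 : (2 : ℝ) ≤ (n : ℝ) - 1 := by linarith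
  have hp0 : (0 : ℝ) < (n : ℝ) - 1 := by linarith
  have hpj : (0 : ℝ) < ((n : ℝ) - 1) ^ j := pow_pos hp0 j
  have hpj1 : (0 : ℝ) < ((n : ℝ) - 1) ^ (j + 1) := pow_pos hp0 (j + 1)
  have hΛR : (1 : ℝ) ≤ (Λ : ℝ) := by exact_mod_cast hΛ
  have hcR : (1 : ℝ) ≤ (c : ℝ) := by exact_mod_cast hc
  have hK : (Knat : ℝ) = ((c : ℝ) + 1) ^ (n - 2) * (Λ : ℝ) * c * (2 * c + 1) := by
    have : ((Λ.toNat : ℤ) : ℝ) = (Λ : ℝ) := by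
      rw [Int.toNat_of_nonneg (by omega)]
    push_cast [hKnat]
    push_cast at this
    rw [this]
  -- key identity
  have key : (z' : ℝ) - z = (Knat : ℝ) / ((n : ℝ) - 1) ^ (j + 1) := by
    rw [← hz, ← hz', Finset.sum_Icc_succ_top (by omega : 1 ≤ j + 1), hc1, hc2, hK]
    have h1 : ((n : ℝ) - 1) ^ j ≠ 0 := ne_of_gt hpj
    have h2 : ((n : ℝ) - 1) ^ (j + 1) ≠ 0 := ne_of_gt hpj1
    field_simp
    ring
  -- bounds
  have hKpos : (0 : ℝ) < (Knat : ℝ) := by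
    rw [hK]
    have h0 : (0:ℝ) < ((c:ℝ)+1) ^ (n-2) := pow_pos (by linarith) _
    have hΛ0 : (0:ℝ) < (Λ : ℝ) := by linarith
    have hc0 : (0:ℝ) < (c : ℝ) := by linarith
    have h2c : (0:ℝ) < 2 * (c:ℝ) + 1 := by linarith
    exact mul_pos (mul_pos (mul_pos h0 hΛ0) hc0) h2c
  have hlt : (Knat : ℝ) < ((n : ℝ) - 1) ^ (j + 1) := by
    have h1 : Knat < 2 ^ (j + 1) := lt_of_lt_of_le (Nat.lt_two_pow_self (n := Knat))
      (Nat.pow_le_pow_right (by norm_num) (by omega))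
    have h2 : ((2 : ℝ)) ^ (j + 1) ≤ ((n : ℝ) - 1) ^ (j + 1) :=
      pow_le_pow_left₀ (by norm_num) hp2 _
    calc (Knat : ℝ) < (2 : ℝ) ^ (j + 1) := by exact_mod_cast h1
      _ ≤ _ := h2
  have h01 : (0 : ℝ) < (z' : ℝ) - z := by
    rw [key]; positivity
  have h02 : (z' : ℝ) - z < 1 := by
    rw [key, div_lt_one hpj1]; exact hlt
  have hzz : (0 : ℝ) < ((z' - z : ℤ) : ℝ) := by push_cast; linarith
  have hzz' : (((z' - z : ℤ)) : ℝ) < 1 := by push_cast; linarith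
  have a : 0 < z' - z := by exact_mod_cast hzz
  have b : z' - z < 1 := by exact_mod_cast hzz'
  omega
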